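/- arXiv:2605.01082 — 2 statements merged into one kernel-verified Lean document; each statement's English description precedes it below -/
import Mathlib

section
/- (Recursive information relevance.) In the hard-instance construction with k ≥ 2 features, run the sequential logit-passing protocol on a path of D = pk agents (1 ≤ p ≤ k), where agent i observes only the single feature x_ℓ with ℓ = ((i−1) mod k) + 1, and each agent's minimizer is assumed to exist and be unique. Then the logit z_{pk} produced at the end of pass p is almost surely a linear combination of the features x_{k−p+1}, x_{k−p+2}, …, x_k only. -/
open MeasureTheory ProbabilityTheory
open scoped ENNReal NNReal

/-- The sigmoid (logistic) function `σ(z) = 1 / (1 + e^{-z})`. -/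
noncomputable def sigmoid (z : ℝ) : ℝ := 1 / (1 + Real.exp (-z))

/-- Expected BCE loss of a logit random variable `f` against a label random variable `Y`. -/
noncomputable def rvBceLoss {Ω : Type*} [MeasurableSpace Ω] (P : Measure Ω)
    (Y : Ω → ℝ) (f : Ω → ℝ) : ℝ :=
  ∫ ω, (Real.log (1 + Real.exp (f ω)) - Y ω * f ω) ∂P

/-- Logits of the sequential logit-passing protocol in the hard instance, where agent `i+1`
observes the single feature with (0-indexed) index `i % k`:
`z_0 ≡ 0` and `z_{i+1} = w_i x_{i % k} + v_i z_i`. -/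
noncomputable def cyclicLogit {Ω : Type*} {k : ℕ} (hk : 0 < k) (X : Ω → Fin k → ℝ)
    (w v : ℕ → ℝ) : ℕ → Ω → ℝ
  | 0 => fun _ => 0
  | (i + 1) => fun ω => w i * X ω ⟨i % k, Nat.mod_lt i hk⟩ + v i * cyclicLogit hk X w v i ω

lemma sigmoid_nonneg (z : ℝ) : 0 ≤ sigmoid z := by
  unfold sigmoid; positivity

lemma sigmoid_le_one (z : ℝ) : sigmoid z ≤ 1 := by
  unfold sigmoid
  rw [div_le_one (by positivity)]
  linarith [Real.exp_pos (-z)]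

lemma abs_sigmoid_le (z : ℝ) : |sigmoid z| ≤ 1 :=
  abs_le.2 ⟨by linarith [sigmoid_nonneg z], sigmoid_le_one z⟩

lemma sigmoid_eq (z : ℝ) : sigmoid z = Real.exp z / (1 + Real.exp z) := by
  unfold sigmoid
  rw [div_eq_div_iff (by positivity) (by positivity), Real.exp_neg]
  have h := Real.exp_ne_zero z
  field_simp
  ring

lemma continuous_sigmoid' : Continuous sigmoid := by
  unfold sigmoid
  exact continuous_const.div (by continuity) (fun x => by positivity)

lemma measurable_sigmoid : Measurable sigmoid := continuous_sigmoid'.measurable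

lemma softplus_nonneg (x : ℝ) : 0 ≤ Real.log (1 + Real.exp x) := by
  apply Real.log_nonneg; linarith [Real.exp_pos x]

lemma softplus_le (x : ℝ) : Real.log (1 + Real.exp x) ≤ Real.log 2 + |x| := by
  have h1 : Real.exp x ≤ Real.exp |x| := Real.exp_le_exp.2 (le_abs_self x)
  have h2 : (1:ℝ) ≤ Real.exp |x| := by
    rw [← Real.exp_zero]; exact Real.exp_le_exp.2 (abs_nonneg x)
  calc Real.log (1 + Real.exp x) ≤ Real.log (2 * Real.exp |x|) :=
        Real.log_le_log (by positivity) (by linarith)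
    _ = Real.log 2 + |x| := by
        rw [Real.log_mul two_ne_zero (Real.exp_ne_zero _), Real.log_exp]

lemma softplus_grad (a b : ℝ) :
    Real.log (1 + Real.exp a) + (b - a) * sigmoid a ≤ Real.log (1 + Real.exp b) := by
  have hea := Real.exp_pos a
  have heb := Real.exp_pos b
  have h1 : (0:ℝ) < 1 + Real.exp a := by linarith
  have h2 : (0:ℝ) < 1 + Real.exp b := by linarith
  have hconv := convexOn_exp.2 (Set.mem_univ (0:ℝ)) (Set.mem_univ (b - a))
      (by positivity : (0:ℝ) ≤ 1/(1+Real.exp a))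
      (by positivity : (0:ℝ) ≤ Real.exp a/(1+Real.exp a)) (by field_simp)
  simp only [smul_eq_mul, mul_zero, zero_add, Real.exp_zero, mul_one] at hconv
  have hprod : Real.exp a * Real.exp (b - a) = Real.exp b := by
    rw [← Real.exp_add]; ring_nf
  have key : Real.exp (sigmoid a * (b - a)) * (1 + Real.exp a) ≤ 1 + Real.exp b := by
    rw [sigmoid_eq]
    have h3 : (1/(1+Real.exp a) + Real.exp a/(1+Real.exp a) * Real.exp (b-a)) * (1 + Real.exp a)
        = 1 + Real.exp b := by
      field_simp
      linarith [hprod]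
    calc Real.exp (Real.exp a/(1+Real.exp a) * (b-a)) * (1 + Real.exp a)
        ≤ (1/(1+Real.exp a) + Real.exp a/(1+Real.exp a) * Real.exp (b-a)) * (1+Real.exp a) :=
          mul_le_mul_of_nonneg_right hconv h1.le
      _ = 1 + Real.exp b := h3
  have hlog := Real.log_le_log (by positivity) key
  rw [Real.log_mul (Real.exp_ne_zero _) (ne_of_gt h1), Real.log_exp] at hlog
  linarith [hlog]

open Real in
lemma integrable_id_gaussianReal01 : Integrable (fun x : ℝ => x) (gaussianReal 0 1) := by
  rw [gaussianReal_of_var_ne_zero 0 one_ne_zero]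
  rw [integrable_withDensity_iff (measurable_gaussianPDF 0 1)
    (Filter.Eventually.of_forall fun x => ENNReal.ofReal_lt_top)]
  have hpdf : ∀ x:ℝ, (gaussianPDF 0 1 x).toReal = gaussianPDFReal 0 1 x :=
    fun x => ENNReal.toReal_ofReal (gaussianPDFReal_nonneg _ _ _)
  simp only [hpdf]
  have heq : (fun x : ℝ => x * gaussianPDFReal 0 1 x)
      = fun x => (Real.sqrt (2*π))⁻¹ * (x * Real.exp (-(1/2) * x^2)) := by
    funext x
    simp only [gaussianPDFReal, NNReal.coe_one, mul_one, sub_zero]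
    rw [show -x^2/2 = -(1/2) * x^2 by ring]
    ring
  rw [heq]
  exact (integrable_mul_exp_neg_mul_sq (by norm_num : (0:ℝ) < 1/2)).const_mul _

open Real in
lemma integral_id_gaussianReal01 : ∫ x, x ∂(gaussianReal 0 1) = 0 := by
  rw [gaussianReal_of_var_ne_zero 0 one_ne_zero]
  have hrw : volume.withDensity (gaussianPDF 0 1)
      = volume.withDensity (fun x => ((gaussianPDFReal 0 1 x).toNNReal : ℝ≥0∞)) := rfl
  rw [hrw, integral_withDensity_eq_integral_smul
    ((measurable_gaussianPDFReal 0 1).real_toNNReal)]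
  have hsm : (fun x : ℝ => (gaussianPDFReal 0 1 x).toNNReal • x)
      = fun x => gaussianPDFReal 0 1 x * x := by
    funext x
    rw [NNReal.smul_def, Real.coe_toNNReal _ (gaussianPDFReal_nonneg _ _ _)]
    rfl
  rw [hsm]
  have hodd : ∀ x:ℝ, gaussianPDFReal 0 1 (-x) * (-x) = -(gaussianPDFReal 0 1 x * x) := by
    intro x
    simp only [gaussianPDFReal, NNReal.coe_one, mul_one, sub_zero, neg_sq]
    ring
  have hneg := MeasureTheory.integral_neg_eq_self (fun x => gaussianPDFReal 0 1 x * x) volume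
  simp only [hodd, integral_neg] at hneg
  linarith [hneg]


lemma continuous_softplus : Continuous (fun t : ℝ => Real.log (1 + Real.exp t)) := by
  apply Continuous.log (by continuity)
  intro x; positivity

lemma bce_integrand_integrable {Ω : Type*} [MeasurableSpace Ω] (P : Measure Ω)
    [IsProbabilityMeasure P] (Y h : Ω → ℝ)
    (hYm : Measurable Y) (hY01 : ∀ᵐ ω ∂P, Y ω = 0 ∨ Y ω = 1)
    (hm : Measurable h) (hi : Integrable h P) :
    Integrable (fun ω => Real.log (1 + Real.exp (h ω)) - Y ω * h ω) P := by
  have hYb : ∀ᵐ ω ∂P, |Y ω| ≤ 1 := by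
    filter_upwards [hY01] with ω hω
    rcases hω with h' | h' <;> simp [h']
  apply Integrable.sub
  · refine Integrable.mono' ((integrable_const (Real.log 2)).add hi.abs)
      ((continuous_softplus.measurable.comp hm).aestronglyMeasurable) ?_
    filter_upwards with ω
    rw [Real.norm_eq_abs, abs_of_nonneg (softplus_nonneg _)]
    exact softplus_le _
  · refine Integrable.mono' hi.abs ((hYm.mul hm).aestronglyMeasurable) ?_
    filter_upwards [hYb] with ω hb
    rw [Real.norm_eq_abs, abs_mul]
    calc |Y ω| * |h ω| ≤ 1 * |h ω| := by gcongr
      _ = |h ω| := one_mul _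

lemma bce_step_le {Ω : Type*} [MeasurableSpace Ω] (P : Measure Ω) [IsProbabilityMeasure P]
    (Y f x : Ω → ℝ) (c : ℝ)
    (hYm : Measurable Y) (hY01 : ∀ᵐ ω ∂P, Y ω = 0 ∨ Y ω = 1)
    (hfm : Measurable f) (hfi : Integrable f P)
    (hxm : Measurable x) (hxi : Integrable x P)
    (h1 : ∫ ω, x ω * sigmoid (f ω) ∂P = 0)
    (h2 : ∫ ω, x ω * Y ω ∂P = 0) :
    rvBceLoss P Y f ≤ rvBceLoss P Y (fun ω => c * x ω + f ω) := by
  have hYb : ∀ᵐ ω ∂P, |Y ω| ≤ 1 := by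
    filter_upwards [hY01] with ω hω
    rcases hω with h' | h' <;> simp [h']
  set g : Ω → ℝ := fun ω => c * x ω + f ω with hg
  have hgm : Measurable g := (hxm.const_mul c).add hfm
  have hgi : Integrable g P := (hxi.const_mul c).add hfi
  have hIf := bce_integrand_integrable P Y f hYm hY01 hfm hfi
  have hIg := bce_integrand_integrable P Y g hYm hY01 hgm hgi
  have hterm : Integrable (fun ω => c * x ω * (sigmoid (f ω) - Y ω)) P := by
    refine Integrable.mono' ((hxi.abs.const_mul (|c|)).mul_const 2)
      (((hxm.const_mul c).mul ((measurable_sigmoid.comp hfm).sub hYm)).aestronglyMeasurable) ?_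
    filter_upwards [hYb] with ω hb
    rw [Real.norm_eq_abs, abs_mul, abs_mul]
    have hσ : |sigmoid (f ω) - Y ω| ≤ 2 := by
      have := abs_sigmoid_le (f ω)
      calc |sigmoid (f ω) - Y ω| ≤ |sigmoid (f ω)| + |Y ω| := abs_sub _ _
        _ ≤ 2 := by linarith
    calc |c| * |x ω| * |sigmoid (f ω) - Y ω| ≤ |c| * |x ω| * 2 := by gcongr
      _ = |c| * |x ω| * 2 := rfl
  have hpt : ∀ ω, Real.log (1 + Real.exp (f ω)) - Y ω * f ω
      ≤ (Real.log (1 + Real.exp (g ω)) - Y ω * g ω) - c * x ω * (sigmoid (f ω) - Y ω) := by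
    intro ω
    have hgr := softplus_grad (f ω) (g ω)
    have hgw : g ω = c * x ω + f ω := rfl
    rw [hgw] at hgr ⊢
    nlinarith [hgr]
  have hint : rvBceLoss P Y f ≤ ∫ ω, ((Real.log (1 + Real.exp (g ω)) - Y ω * g ω)
      - c * x ω * (sigmoid (f ω) - Y ω)) ∂P := by
    exact integral_mono hIf (hIg.sub hterm) hpt
  have hsplit : ∫ ω, ((Real.log (1 + Real.exp (g ω)) - Y ω * g ω)
      - c * x ω * (sigmoid (f ω) - Y ω)) ∂P
      = rvBceLoss P Y g - ∫ ω, c * x ω * (sigmoid (f ω) - Y ω) ∂P :=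
    integral_sub hIg hterm
  have hxσ : Integrable (fun ω => x ω * sigmoid (f ω)) P := by
    refine Integrable.mono' hxi.abs
      ((hxm.mul (measurable_sigmoid.comp hfm)).aestronglyMeasurable) ?_
    filter_upwards with ω
    rw [Real.norm_eq_abs, abs_mul]
    calc |x ω| * |sigmoid (f ω)| ≤ |x ω| * 1 := by gcongr; exact abs_sigmoid_le _
      _ = |x ω| := mul_one _
  have hxY : Integrable (fun ω => x ω * Y ω) P := by
    refine Integrable.mono' hxi.abs ((hxm.mul hYm).aestronglyMeasurable) ?_
    filter_upwards [hYb] with ω hb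
    rw [Real.norm_eq_abs, abs_mul]
    calc |x ω| * |Y ω| ≤ |x ω| * 1 := by gcongr
      _ = |x ω| := mul_one _
  have hzero : ∫ ω, c * x ω * (sigmoid (f ω) - Y ω) ∂P = 0 := by
    have e1 : (fun ω => c * x ω * (sigmoid (f ω) - Y ω))
        = fun ω => c * (x ω * sigmoid (f ω) - x ω * Y ω) := by
      funext ω; ring
    rw [e1, MeasureTheory.integral_const_mul, integral_sub hxσ hxY, h1, h2]
    simp
  rw [hsplit, hzero, sub_zero] at hint
  exact hint

/-- Recursive information relevance for the hard instance: with `k ≥ 2` i.i.d. standard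
Gaussians `Z_1, …, Z_k`, features `x_1 = Z_1`, `x_i = Z_i − Z_{i−1}`, label
`y | x ~ Bernoulli(σ(Z_k))`, and the cyclic sequential logit-passing protocol run for
`D = pk` agents (`1 ≤ p ≤ k`) with each agent's BCE minimizer existing and unique
(as a predictor, up to a.e. equality), the final logit `z_{pk}` is almost surely a linear
combination of the features `x_{k−p+1}, …, x_k` only. -/
theorem recursive_information_relevance
    {Ω : Type*} [MeasurableSpace Ω] (P : Measure Ω) [IsProbabilityMeasure P]
    (k p : ℕ) (hk : 2 ≤ k) (hp1 : 1 ≤ p) (hpk : p ≤ k)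
    (hk0 : 0 < k)
    (Z : Fin k → Ω → ℝ) (hZmeas : ∀ i, Measurable (Z i))
    (hZindep : iIndepFun Z P)
    (hZgauss : ∀ i, Measure.map (Z i) P = gaussianReal 0 1)
    (X : Ω → Fin k → ℝ)
    (hX0 : ∀ ω, X ω ⟨0, hk0⟩ = Z ⟨0, hk0⟩ ω)
    (hXsucc : ∀ ω (i : Fin k), 0 < (i : ℕ) →
      X ω i = Z i ω - Z ⟨(i : ℕ) - 1, by omega⟩ ω)
    (Y : Ω → ℝ) (hYmeas : Measurable Y)
    (hY01 : ∀ᵐ ω ∂P, Y ω = 0 ∨ Y ω = 1)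
    (hYcond : ∀ f : (Fin k → ℝ) → ℝ, Measurable f →
      Integrable (fun ω => f (X ω)) P →
      ∫ ω, Y ω * f (X ω) ∂P = ∫ ω, sigmoid (∑ j, X ω j) * f (X ω) ∂P)
    (w v : ℕ → ℝ)
    (hmin : ∀ i < p * k, ∀ w' v' : ℝ,
      rvBceLoss P Y (cyclicLogit hk0 X w v (i + 1))
        ≤ rvBceLoss P Y (fun ω => w' * X ω ⟨i % k, Nat.mod_lt i hk0⟩
            + v' * cyclicLogit hk0 X w v i ω))
    (huniq : ∀ i < p * k, ∀ w' v' : ℝ,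
      rvBceLoss P Y (fun ω => w' * X ω ⟨i % k, Nat.mod_lt i hk0⟩
          + v' * cyclicLogit hk0 X w v i ω)
        ≤ rvBceLoss P Y (cyclicLogit hk0 X w v (i + 1)) →
      (fun ω => w' * X ω ⟨i % k, Nat.mod_lt i hk0⟩ + v' * cyclicLogit hk0 X w v i ω)
        =ᵐ[P] cyclicLogit hk0 X w v (i + 1)) :
    ∃ c : Fin k → ℝ, (∀ j : Fin k, (j : ℕ) < k - p → c j = 0) ∧
      cyclicLogit hk0 X w v (p * k) =ᵐ[P] fun ω => ∑ j, c j * X ω j := by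
  classical
  -- basic facts about Z
  have hZint : ∀ a, Integrable (Z a) P := by
    intro a
    have h : Integrable id (Measure.map (Z a) P) := by
      rw [hZgauss a]; exact integrable_id_gaussianReal01
    rw [integrable_map_measure aestronglyMeasurable_id (hZmeas a).aemeasurable] at h
    exact h
  have hZmean : ∀ a, ∫ ω, Z a ω ∂P = 0 := by
    intro a
    have h : ∫ y, id y ∂(Measure.map (Z a) P) = ∫ ω, id (Z a ω) ∂P :=
      integral_map (hZmeas a).aemeasurable aestronglyMeasurable_id
    simp only [id] at h
    rw [← h, hZgauss a, integral_id_gaussianReal01]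
  -- features as functions of Z
  have hXfun : ∀ j : Fin k, (j:ℕ) = 0 → (fun ω => X ω j) = Z ⟨0, hk0⟩ := by
    intro j hj
    have hj' : j = ⟨0, hk0⟩ := by ext; exact hj
    funext ω; rw [hj']; exact hX0 ω
  have hXmeas : ∀ j : Fin k, Measurable (fun ω => X ω j) := by
    intro j
    rcases Nat.eq_zero_or_pos (j:ℕ) with h0 | h0
    · rw [hXfun j h0]; exact hZmeas _
    · have he : (fun ω => X ω j) = fun ω => Z j ω
          - Z ⟨(j:ℕ)-1, lt_of_le_of_lt (Nat.sub_le _ _) j.isLt⟩ ω := by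
        funext ω; exact hXsucc ω j h0
      rw [he]; exact (hZmeas _).sub (hZmeas _)
  have hXint : ∀ j : Fin k, Integrable (fun ω => X ω j) P := by
    intro j
    rcases Nat.eq_zero_or_pos (j:ℕ) with h0 | h0
    · rw [hXfun j h0]; exact hZint _
    · have he : (fun ω => X ω j) = fun ω => Z j ω
          - Z ⟨(j:ℕ)-1, lt_of_le_of_lt (Nat.sub_le _ _) j.isLt⟩ ω := by
        funext ω; exact hXsucc ω j h0
      rw [he]; exact (hZint _).sub (hZint _)
  -- measurability and integrability of the logits
  have hzmi : ∀ i, Measurable (cyclicLogit hk0 X w v i)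
      ∧ Integrable (cyclicLogit hk0 X w v i) P := by
    intro i
    induction i with
    | zero =>
      constructor
      · exact measurable_const
      · exact integrable_const 0
    | succ i ih =>
      have he : cyclicLogit hk0 X w v (i+1)
          = fun ω => w i * X ω ⟨i % k, Nat.mod_lt i hk0⟩ + v i * cyclicLogit hk0 X w v i ω := rfl
      constructor
      · rw [he]; exact ((hXmeas _).const_mul _).add (ih.1.const_mul _)
      · rw [he]; exact ((hXint _).const_mul _).add (ih.2.const_mul _)
  -- telescoping sum
  have htel : ∀ ω, ∑ j : Fin k, X ω j = Z ⟨k-1, by omega⟩ ω := by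
    intro ω
    have H : ∀ n, ∀ hn : n < k,
        ∑ j ∈ Finset.univ.filter (fun j : Fin k => (j:ℕ) ≤ n), X ω j = Z ⟨n, hn⟩ ω := by
      intro n
      induction n with
      | zero =>
        intro hn
        have hs : Finset.univ.filter (fun j : Fin k => (j:ℕ) ≤ 0) = {⟨0, hk0⟩} := by
          ext j
          simp [Fin.ext_iff]
        rw [hs, Finset.sum_singleton, hX0]
      | succ n ihn =>
        intro hn
        have hnk : n < k := by omega
        have hs : Finset.univ.filter (fun j : Fin k => (j:ℕ) ≤ n+1)
            = insert (⟨n+1, hn⟩ : Fin k)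
                (Finset.univ.filter (fun j : Fin k => (j:ℕ) ≤ n)) := by
          ext j
          simp only [Finset.mem_filter, Finset.mem_univ, true_and, Finset.mem_insert,
            Fin.ext_iff]
          omega
        rw [hs, Finset.sum_insert (by simp), ihn hnk,
          hXsucc ω ⟨n+1, hn⟩ (by simp)]
        exact sub_add_cancel _ _
    have h2 := H (k-1) (by omega)
    rw [← h2]
    congr 1
    ext j
    simp only [Finset.mem_filter, Finset.mem_univ, true_and]
    exact iff_of_true trivial (Nat.le_sub_one_of_lt j.isLt)
  -- integrability of Z times a bounded function
  have hZmulG : ∀ (a : Fin k) (G : Ω → ℝ), Measurable G → (∀ ω, |G ω| ≤ 1) →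
      Integrable (fun ω => Z a ω * G ω) P := by
    intro a G hGm hGb
    refine Integrable.mono' (hZint a).abs (((hZmeas a).mul hGm).aestronglyMeasurable) ?_
    filter_upwards with ω
    rw [Real.norm_eq_abs, abs_mul]
    calc |Z a ω| * |G ω| ≤ |Z a ω| * 1 := by gcongr; exact hGb ω
      _ = |Z a ω| := mul_one _
  -- core independence computation
  have hcore : ∀ (r : ℕ) (a : Fin k), (a:ℕ) < r → ∀ φ : (Fin k → ℝ) → ℝ,
      Measurable φ → (∀ g, |φ g| ≤ 1) →
      ∫ ω, Z a ω * φ (fun j => if r ≤ (j:ℕ) then Z j ω else 0) ∂P = 0 := by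
    intro r a ha φ hφ hφb
    set T : Finset (Fin k) := Finset.univ.filter (fun j : Fin k => r ≤ (j:ℕ)) with hT
    have hmemT : ∀ j : Fin k, j ∈ T ↔ r ≤ (j:ℕ) := by
      intro j; simp [hT]
    have hdisj : Disjoint ({a} : Finset (Fin k)) T := by
      rw [Finset.disjoint_left]
      intro b hb hbT
      rw [Finset.mem_singleton] at hb
      rw [hmemT] at hbT
      omega
    have hindep := hZindep.indepFun_finset {a} T hdisj hZmeas
    set e1 : ({x : Fin k // x ∈ ({a} : Finset (Fin k))} → ℝ) → ℝ :=
      fun s => s ⟨a, Finset.mem_singleton_self a⟩ with he1def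
    set e2 : ({x : Fin k // x ∈ T} → ℝ) → ℝ :=
      fun s => φ (fun j => if hj : j ∈ T then s ⟨j, hj⟩ else 0) with he2def
    have he1 : Measurable e1 := measurable_pi_apply _
    have he2 : Measurable e2 := by
      apply hφ.comp
      apply measurable_pi_lambda
      intro j
      by_cases hj : j ∈ T
      · simp only [hj, dif_pos]
        exact measurable_pi_apply _
      · simp only [hj, dif_neg, not_false_iff]
        exact measurable_const
    have hcomp := hindep.comp he1 he2
    set G : Ω → ℝ := fun ω => φ (fun j => if r ≤ (j:ℕ) then Z j ω else 0) with hGdef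
    have hGm : Measurable G := by
      apply hφ.comp
      apply measurable_pi_lambda
      intro j
      by_cases hj : r ≤ (j:ℕ)
      · simp only [hj, if_true]
        exact hZmeas j
      · simp only [hj, if_false]
        exact measurable_const
    have hind2 : IndepFun (Z a) G P := by
      have hl : (e1 ∘ fun ω (i : {x : Fin k // x ∈ ({a} : Finset (Fin k))}) => Z i ω) = Z a := rfl
      have hr : (e2 ∘ fun ω (i : {x : Fin k // x ∈ T}) => Z i ω) = G := by
        funext ω
        simp only [Function.comp_apply, he2def, hGdef]
        congr 1
        funext j
        by_cases hj : j ∈ T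
        · rw [dif_pos hj, if_pos ((hmemT j).mp hj)]
        · rw [dif_neg hj, if_neg (fun hc => hj ((hmemT j).mpr hc))]
      rw [hl, hr] at hcomp
      exact hcomp
    have hGb : ∀ ω, |G ω| ≤ 1 := fun ω => hφb _
    have hGi : Integrable G P := by
      refine Integrable.mono' (integrable_const 1) hGm.aestronglyMeasurable ?_
      filter_upwards with ω
      rw [Real.norm_eq_abs]
      exact hGb ω
    have hmul := IndepFun.integral_mul_eq_mul_integral hind2 (hZint a).aestronglyMeasurable hGi.aestronglyMeasurable
    have : ∫ ω, Z a ω * G ω ∂P = (∫ ω, Z a ω ∂P) * ∫ ω, G ω ∂P := hmul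
    rw [this, hZmean a, zero_mul]
  -- the main induction
  have main : ∀ i, i ≤ p * k → ∃ c : Fin k → ℝ,
      (∀ j : Fin k, (j:ℕ) < (if i % k < k - i / k then k - i / k else k - i / k - 1) →
        c j = 0) ∧
      cyclicLogit hk0 X w v i =ᵐ[P] fun ω => ∑ j, c j * X ω j := by
    intro i
    induction i with
    | zero =>
      intro _
      refine ⟨fun _ => 0, fun j _ => rfl, ?_⟩
      have hz0 : cyclicLogit hk0 X w v 0 = fun _ => (0:ℝ) := rfl
      rw [hz0]
      apply Filter.EventuallyEq.of_eq
      funext ω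
      simp
    | succ i ih =>
      intro hi1
      have hi : i < p * k := hi1
      obtain ⟨c, hc0, hcae⟩ := ih (Nat.le_of_lt hi)
      obtain ⟨q, hq⟩ : ∃ n, i / k = n := ⟨_, rfl⟩
      obtain ⟨m, hm⟩ : ∃ n, i % k = n := ⟨_, rfl⟩
      have hdm : q * k + m = i := by
        rw [← hq, ← hm, Nat.mul_comm]; exact Nat.div_add_mod i k
      have hmk : m < k := hm ▸ Nat.mod_lt i hk0
      have hqp : q < p := hq ▸ (Nat.div_lt_iff_lt_mul hk0).mpr hi
      have hqk : q < k := lt_of_lt_of_le hqp hpk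
      rw [hq, hm] at hc0
      have hmod1 : m + 1 < k → (i+1) % k = m + 1 ∧ (i+1)/k = q := by
        intro h
        have h1 : i + 1 = (m+1) + k * q := by rw [← hdm]; ring
        constructor
        · rw [h1, Nat.add_mul_mod_self_left, Nat.mod_eq_of_lt h]
        · rw [h1, Nat.add_mul_div_left _ _ hk0, Nat.div_eq_of_lt h, Nat.zero_add]
      have hmod2 : m + 1 = k → (i+1) % k = 0 ∧ (i+1)/k = q + 1 := by
        intro h
        have h1 : i + 1 = (q+1) * k := by rw [← hdm, Nat.add_assoc, h]; ring
        constructor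
        · rw [h1, Nat.mul_mod_left]
        · rw [h1, Nat.mul_div_cancel _ hk0]
      have hfinval : ((⟨i % k, Nat.mod_lt i hk0⟩ : Fin k) : ℕ) = m := hm
      by_cases hcase : m < k - q - 1
      · -- Case B : the observed feature is independent of (logit, label)
        have hmtop : m + 1 < k := by omega
        obtain ⟨hmod, hdiv⟩ := hmod1 hmtop
        rw [hmod, hdiv]
        have hti : (if m < k - q then k - q else k - q - 1) = k - q := if_pos (by omega)
        set jm : Fin k := ⟨i % k, Nat.mod_lt i hk0⟩ with hjmdef
        have hjmval : (jm : ℕ) = m := hfinval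
        set jpred : Fin k → Fin k :=
          fun j => ⟨(j:ℕ) - 1, lt_of_le_of_lt (Nat.sub_le _ _) j.isLt⟩ with hjpreddef
        set φ1 : (Fin k → ℝ) → ℝ :=
          fun g => sigmoid (v i * ∑ j : Fin k, c j * (g j - g (jpred j))) with hφ1def
        set φ0 : (Fin k → ℝ) → ℝ :=
          fun g => sigmoid (g ⟨k-1, by omega⟩) with hφ0def
        have hφ1m : Measurable φ1 := by
          rw [hφ1def]
          apply measurable_sigmoid.comp
          apply Measurable.const_mul
          apply Finset.measurable_sum
          intro j _
          exact ((measurable_pi_apply j).sub (measurable_pi_apply (jpred j))).const_mul _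
        have hφ0m : Measurable φ0 := by
          rw [hφ0def]
          exact measurable_sigmoid.comp (measurable_pi_apply _)
        have hφ1b : ∀ g, |φ1 g| ≤ 1 := fun g => abs_sigmoid_le _
        have hφ0b : ∀ g, |φ0 g| ≤ 1 := fun g => abs_sigmoid_le _
        have hmask : ∀ ω, ∑ j : Fin k, c j * X ω j
            = ∑ j : Fin k, c j * ((if k - q - 1 ≤ (j:ℕ) then Z j ω else 0)
              - (if k - q - 1 ≤ (j:ℕ) - 1 then Z (jpred j) ω else 0)) := by
          intro ω
          apply Finset.sum_congr rfl
          intro j _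
          rcases Nat.lt_or_ge (j:ℕ) (k - q) with hcj | hcj
          · rw [hc0 j (by rw [hti]; exact hcj), zero_mul, zero_mul]
          · congr 1
            have hj1 : 0 < (j:ℕ) := by omega
            rw [hXsucc ω j hj1]
            have h1 : k - q - 1 ≤ (j:ℕ) := by omega
            have h2 : k - q - 1 ≤ (j:ℕ) - 1 := by omega
            rw [if_pos h1, if_pos h2]
        have master : ∀ φ : (Fin k → ℝ) → ℝ, Measurable φ → (∀ g, |φ g| ≤ 1) →
            ∫ ω, X ω jm * φ (fun j : Fin k => if k - q - 1 ≤ (j:ℕ) then Z j ω else 0) ∂P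
              = 0 := by
          intro φ hφ hφb
          have hGm : Measurable
              (fun ω => φ (fun j : Fin k => if k - q - 1 ≤ (j:ℕ) then Z j ω else 0)) := by
            apply hφ.comp
            apply measurable_pi_lambda
            intro j
            by_cases hj : k - q - 1 ≤ (j:ℕ)
            · simpa only [if_pos hj] using hZmeas j
            · simp only [if_neg hj]
              exact measurable_const
          have hGb : ∀ ω,
              |φ (fun j : Fin k => if k - q - 1 ≤ (j:ℕ) then Z j ω else 0)| ≤ 1 :=
            fun ω => hφb _
          rcases Nat.eq_zero_or_pos m with hm0 | hm0
          · have hx0 : (fun ω => X ω jm) = Z ⟨0, hk0⟩ := hXfun jm (by rw [hjmval, hm0])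
            have hx0' : ∀ ω, X ω jm = Z ⟨0, hk0⟩ ω := fun ω => congrFun hx0 ω
            simp only [hx0']
            exact hcore (k - q - 1) ⟨0, hk0⟩ (by show (0:ℕ) < k - q - 1; omega) φ hφ hφb
          · have hxe : ∀ ω, X ω jm = Z jm ω - Z (jpred jm) ω := by
              intro ω
              rw [hXsucc ω jm (by rw [hjmval]; exact hm0)]
            simp only [hxe, sub_mul]
            rw [integral_sub (hZmulG jm _ hGm hGb) (hZmulG (jpred jm) _ hGm hGb),
              hcore (k - q - 1) jm (by rw [show ((jm:Fin k):ℕ) = m from hjmval]; omega) φ hφ hφb,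
              hcore (k - q - 1) (jpred jm)
                (by show ((jm:Fin k):ℕ) - 1 < k - q - 1; rw [hjmval]; omega) φ hφ hφb]
            simp
        have key1 : ∫ ω, X ω jm * sigmoid (v i * cyclicLogit hk0 X w v i ω) ∂P = 0 := by
          have hstep : ∫ ω, X ω jm * sigmoid (v i * cyclicLogit hk0 X w v i ω) ∂P
              = ∫ ω, X ω jm
                  * φ1 (fun j : Fin k => if k - q - 1 ≤ (j:ℕ) then Z j ω else 0) ∂P := by
            apply integral_congr_ae
            filter_upwards [hcae] with ω hω
            rw [hω]
            simp only [hφ1def]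
            congr 2
            rw [hmask ω]
          rw [hstep]
          exact master φ1 hφ1m hφ1b
        have key2 : ∫ ω, X ω jm * Y ω ∂P = 0 := by
          have hcomm : ∫ ω, X ω jm * Y ω ∂P
              = ∫ ω, Y ω * (fun g : Fin k → ℝ => g jm) (X ω) ∂P := by
            apply integral_congr_ae
            apply Filter.EventuallyEq.of_eq
            funext ω
            simp [mul_comm]
          rw [hcomm, hYcond (fun g => g jm) (measurable_pi_apply _) (hXint jm)]
          have hstep : ∫ ω, sigmoid (∑ j, X ω j) * (fun g : Fin k → ℝ => g jm) (X ω) ∂P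
              = ∫ ω, X ω jm
                  * φ0 (fun j : Fin k => if k - q - 1 ≤ (j:ℕ) then Z j ω else 0) ∂P := by
            apply integral_congr_ae
            apply Filter.EventuallyEq.of_eq
            funext ω
            simp only [hφ0def]
            rw [htel ω, if_pos (by show k - q - 1 ≤ k - 1; omega)]
            exact mul_comm _ _
          rw [hstep]
          exact master φ0 hφ0m hφ0b
        have hfm : Measurable (fun ω => v i * cyclicLogit hk0 X w v i ω) :=
          (hzmi i).1.const_mul _
        have hfi : Integrable (fun ω => v i * cyclicLogit hk0 X w v i ω) P :=
          (hzmi i).2.const_mul _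
        have H := bce_step_le P Y (fun ω => v i * cyclicLogit hk0 X w v i ω)
          (fun ω => X ω jm) (w i) hYmeas hY01 hfm hfi (hXmeas jm) (hXint jm) key1 key2
        have hf0 : (fun ω => (0:ℝ) * X ω ⟨i % k, Nat.mod_lt i hk0⟩
            + v i * cyclicLogit hk0 X w v i ω)
            = fun ω => v i * cyclicLogit hk0 X w v i ω := by
          funext ω
          ring
        have H2 := huniq i hi 0 (v i) (by
          rw [hf0]
          exact H)
        refine ⟨fun j => v i * c j, ?_, ?_⟩
        · intro j hj
          have hj' : (j:ℕ) < k - q := by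
            split_ifs at hj <;> omega
          show v i * c j = 0
          rw [hc0 j (by rw [hti]; exact hj'), mul_zero]
        · have hae1 : cyclicLogit hk0 X w v (i+1)
              =ᵐ[P] fun ω => v i * cyclicLogit hk0 X w v i ω := by
            have h' := H2.symm
            rw [hf0] at h'
            exact h'
          refine hae1.trans ?_
          filter_upwards [hcae] with ω hω
          show v i * cyclicLogit hk0 X w v i ω = ∑ j : Fin k, v i * c j * X ω j
          rw [hω, Finset.mul_sum]
          apply Finset.sum_congr rfl
          intros
          ring
      · -- Case A : just accumulate the new feature
        push_neg at hcase  -- k - q - 1 ≤ m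
        refine ⟨fun j => (if (j:ℕ) = m then w i else 0) + v i * c j, ?_, ?_⟩
        · intro j hj
          have hjm : (j:ℕ) ≠ m ∧ (j:ℕ) < (if m < k - q then k - q else k - q - 1) := by
            rcases Nat.lt_or_ge (m+1) k with hmt | hmt
            · obtain ⟨h1, h2⟩ := hmod1 hmt
              rw [h1, h2] at hj
              constructor
              · split_ifs at hj with hsp <;> omega
              · split_ifs at hj with hsp <;> (split_ifs <;> omega)
            · have hmt' : m + 1 = k := by omega
              obtain ⟨h1, h2⟩ := hmod2 hmt'
              rw [h1, h2] at hj
              constructor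
              · split_ifs at hj with hsp <;> omega
              · split_ifs at hj with hsp <;> (split_ifs <;> omega)
          show (if (j:ℕ) = m then w i else 0) + v i * c j = 0
          rw [if_neg hjm.1, hc0 j hjm.2, mul_zero, add_zero]
        · have hexp : cyclicLogit hk0 X w v (i+1)
              = fun ω => w i * X ω ⟨i % k, Nat.mod_lt i hk0⟩
                + v i * cyclicLogit hk0 X w v i ω := rfl
          rw [hexp]
          filter_upwards [hcae] with ω hω
          rw [hω]
          have hsplit : ∑ j : Fin k, ((if (j:ℕ) = m then w i else 0) + v i * c j) * X ω j
              = (∑ j : Fin k, (if (j:ℕ) = m then w i else 0) * X ω j)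
                + ∑ j : Fin k, v i * (c j * X ω j) := by
            rw [← Finset.sum_add_distrib]
            apply Finset.sum_congr rfl
            intros
            ring
          rw [hsplit]
          have h1 : ∑ j : Fin k, (if (j:ℕ) = m then w i else 0) * X ω j
              = w i * X ω ⟨i % k, Nat.mod_lt i hk0⟩ := by
            rw [Finset.sum_eq_single_of_mem (⟨i % k, Nat.mod_lt i hk0⟩ : Fin k)
              (Finset.mem_univ _)]
            · rw [if_pos hfinval]
            · intro b _ hb
              rw [if_neg, zero_mul]
              intro hbm
              exact hb (Fin.val_injective (by rw [hbm, hfinval]))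
          rw [h1, ← Finset.mul_sum]
  obtain ⟨c, hc0, hcae⟩ := main (p*k) le_rfl
  refine ⟨c, ?_, hcae⟩
  intro j hj
  apply hc0
  have h1 : (p*k) % k = 0 := Nat.mul_mod_left p k
  have h2 : (p*k) / k = p := by rw [Nat.mul_div_cancel _ hk0]
  rw [h1, h2, if_pos (by omega)]
  exact hj
end

section
/- (Lower bound on convergence.) There is a universal constant C > 0 with the following property. Let Z and ξ be independent standard Gaussian random variables, and let the label satisfy y | Z ~ Bernoulli(σ(Z)), so the Bayes-optimal logit is Z itself with loss L(Z) = E[−σ(Z)·Z + log(1 + e^{Z})]. For every integer p ≥ 1, let ẑ minimize the expected BCE loss L(z) = E[−σ(Z)·z + log(1 + e^{z})] over all logits of the form z = c(Z + ξ/√p), c ∈ ℝ (the minimizer exists). Then the excess loss satisfies L(ẑ) − L(Z) ≥ C/(p+1). -/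
open MeasureTheory ProbabilityTheory

/-- Expected BCE loss against soft labels `σ(Z)`: with `y | Z ~ Bernoulli(σ(Z))`, the
expected BCE loss of a logit random variable `f` is `L(f) = E[−σ(Z)·f + log(1+e^f)]`. -/
noncomputable def softLoss {Ω : Type*} [MeasurableSpace Ω] (P : Measure Ω)
    (Z f : Ω → ℝ) : ℝ :=
  ∫ ω, (-(sigmoid (Z ω)) * f ω + Real.log (1 + Real.exp (f ω))) ∂P

namespace LBC


lemma one_add_exp_pos (t : ℝ) : 0 < 1 + Real.exp t := by positivity

lemma sigmoid_pos (t : ℝ) : 0 < sigmoid t := by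
  unfold sigmoid; positivity

lemma sigmoid_lt_one (t : ℝ) : sigmoid t < 1 := by
  unfold sigmoid
  rw [div_lt_one (one_add_exp_pos _)]
  linarith [Real.exp_pos (-t)]

lemma sigmoid_eq (t : ℝ) : sigmoid t = Real.exp t / (1 + Real.exp t) := by
  unfold sigmoid
  rw [Real.exp_neg]
  have h1 : Real.exp t ≠ 0 := (Real.exp_pos t).ne'
  have h2 : 1 + Real.exp t ≠ 0 := (one_add_exp_pos t).ne'
  have h3 : 1 + (Real.exp t)⁻¹ ≠ 0 := by positivity
  field_simp
  ring

lemma continuous_sigmoid : Continuous sigmoid := by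
  apply Continuous.div continuous_const
  · exact continuous_const.add (Real.continuous_exp.comp continuous_neg)
  · intro t; exact (one_add_exp_pos (-t)).ne'

lemma sigmoid_mono : Monotone sigmoid := by
  intro s t hst
  unfold sigmoid
  apply div_le_div_of_nonneg_left one_pos.le (one_add_exp_pos _)
  have := Real.exp_le_exp.2 (neg_le_neg hst)
  linarith

/-- derivative of `log (1 + exp t)` is `sigmoid t` -/
lemma hasDerivAt_logexp (t : ℝ) :
    HasDerivAt (fun t => Real.log (1 + Real.exp t)) (sigmoid t) t := by
  have h : HasDerivAt (fun t : ℝ => 1 + Real.exp t) (Real.exp t) t :=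
    (Real.hasDerivAt_exp t).const_add 1
  have := h.log (one_add_exp_pos t).ne'
  simpa [sigmoid_eq, div_eq_mul_inv] using this

noncomputable def ell (z t : ℝ) : ℝ := -(sigmoid z) * t + Real.log (1 + Real.exp t)

lemma hasDerivAt_ell (z t : ℝ) :
    HasDerivAt (fun t => ell z t) (sigmoid t - sigmoid z) t := by
  have h1 : HasDerivAt (fun t : ℝ => -(sigmoid z) * t) (-(sigmoid z)) t := by
    simpa using (hasDerivAt_id t).const_mul (-(sigmoid z))
  have := h1.add (hasDerivAt_logexp t)
  convert this using 1
  · rfl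
  · rfl
  · rfl
  · ring

lemma continuous_ell (z : ℝ) : Continuous (fun t => ell z t) :=
  (hasDerivAt_ell z · |>.differentiableAt.continuousAt) |> fun h => by
    exact continuous_iff_continuousAt.2 fun t => (hasDerivAt_ell z t).differentiableAt.continuousAt

lemma hasDerivAt_sigmoid (t : ℝ) :
    HasDerivAt sigmoid (sigmoid t * (1 - sigmoid t)) t := by
  have h : HasDerivAt (fun t : ℝ => 1 + Real.exp (-t)) (-Real.exp (-t)) t := by
    have := ((Real.hasDerivAt_exp (-t)).comp t ((hasDerivAt_id t).neg))
    simpa using this.const_add 1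
  have hne : ∀ s : ℝ, 1 + Real.exp (-s) ≠ 0 := fun s => (one_add_exp_pos (-s)).ne'
  have hd := (hasDerivAt_const t (1:ℝ)).div h (hne t)
  have : HasDerivAt sigmoid ((0 * (1 + Real.exp (-t)) - 1 * -Real.exp (-t)) / (1 + Real.exp (-t)) ^ 2) t := hd
  convert this using 1
  unfold sigmoid
  have := hne t
  field_simp
  ring




noncomputable def dlt : ℝ := (2 + Real.exp 4 + Real.exp (-4))⁻¹

lemma dlt_pos : 0 < dlt := by
  unfold dlt
  have := Real.exp_pos (4:ℝ); have := Real.exp_pos (-4:ℝ)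
  positivity

lemma sigmoid_deriv_ge {t : ℝ} (ht : |t| ≤ 4) : dlt ≤ sigmoid t * (1 - sigmoid t) := by
  have h1 : sigmoid t * (1 - sigmoid t) = (2 + Real.exp t + Real.exp (-t))⁻¹ := by
    unfold sigmoid
    have h2 : 1 + Real.exp (-t) ≠ 0 := (one_add_exp_pos (-t)).ne'
    have h3 : Real.exp (-t) = (Real.exp t)⁻¹ := Real.exp_neg t
    have h4 : Real.exp t ≠ 0 := (Real.exp_pos t).ne'
    rw [h3] at h2 ⊢
    field_simp
    ring
  rw [h1]
  unfold dlt
  apply inv_anti₀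
  · have := Real.exp_pos t; have := Real.exp_pos (-t); positivity
  · have hc : Real.cosh t ≤ Real.cosh 4 := by
      rw [Real.cosh_le_cosh]
      simpa using ht
    rw [Real.cosh_eq, Real.cosh_eq] at hc
    linarith

lemma u_mono : MonotoneOn (fun s => sigmoid s - dlt * s) (Set.Icc (-4:ℝ) 4) := by
  apply monotoneOn_of_deriv_nonneg (convex_Icc _ _)
  · exact (continuous_sigmoid.sub (continuous_const.mul continuous_id)).continuousOn
  · intro x hx
    have hds : HasDerivAt (fun s : ℝ => sigmoid s - dlt * s) (sigmoid x * (1 - sigmoid x) - dlt) x := by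
      exact ((hasDerivAt_sigmoid x).sub ((hasDerivAt_id x).const_mul dlt)).congr_deriv (by ring)
    exact hds.differentiableAt.differentiableWithinAt
  · intro x hx
    rw [interior_Icc] at hx
    have hds : HasDerivAt (fun s : ℝ => sigmoid s - dlt * s) (sigmoid x * (1 - sigmoid x) - dlt) x := by
      exact ((hasDerivAt_sigmoid x).sub ((hasDerivAt_id x).const_mul dlt)).congr_deriv (by ring)
    rw [hds.deriv]
    have : |x| ≤ 4 := by rw [abs_le]; exact ⟨hx.1.le, hx.2.le⟩
    have := sigmoid_deriv_ge this
    linarith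

/-- key quadratic lower bound -/
lemma ell_ge {z t : ℝ} (hz : |z| ≤ 4) (ht : |t| ≤ 4) :
    ell z z + dlt / 2 * (t - z) ^ 2 ≤ ell z t := by
  rw [abs_le] at hz ht
  set g : ℝ → ℝ := fun s => ell z s - dlt / 2 * (s - z) ^ 2 with hg
  have hgd : ∀ s : ℝ, HasDerivAt g (sigmoid s - sigmoid z - dlt * (s - z)) s := by
    intro s
    have h1 : HasDerivAt (fun s : ℝ => dlt / 2 * (s - z) ^ 2) (dlt / 2 * (2 * (s - z))) s := by
      have : HasDerivAt (fun s : ℝ => (s - z) ^ 2) (2 * (s - z)) s := by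
        exact (((hasDerivAt_id s).sub_const z).pow 2).congr_deriv (by norm_num)
      exact this.const_mul _
    have := (hasDerivAt_ell z s).sub h1
    convert this using 1
    · rfl
    · rfl
    · rfl
    · ring
  have hgc : Continuous g := by
    apply (continuous_ell z).sub
    exact continuous_const.mul ((continuous_id.sub continuous_const).pow 2)
  have key : ∀ x ∈ Set.Icc (-4:ℝ) 4, ∀ y ∈ Set.Icc (-4:ℝ) 4, z ≤ x → x ≤ y → g x ≤ g y := by
    intro x hx y hy hzx hxy
    have hmono : MonotoneOn g (Set.Icc x 4) := by
      apply monotoneOn_of_deriv_nonneg (convex_Icc _ _) hgc.continuousOn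
      · intro s _; exact (hgd s).differentiableAt.differentiableWithinAt
      · intro s hs
        rw [interior_Icc] at hs
        rw [(hgd s).deriv]
        have hsI : s ∈ Set.Icc (-4:ℝ) 4 := ⟨le_trans hx.1 hs.1.le, hs.2.le⟩
        have hzI : z ∈ Set.Icc (-4:ℝ) 4 := ⟨hz.1, hz.2⟩
        have hzs : z ≤ s := le_trans (le_trans hzx hs.1.le) le_rfl
        have h5 : sigmoid z - dlt * z ≤ sigmoid s - dlt * s := u_mono hzI hsI hzs
        nlinarith [h5]
    exact hmono ⟨le_rfl, hx.2⟩ ⟨hxy, hy.2⟩ hxy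
  have key' : ∀ x ∈ Set.Icc (-4:ℝ) 4, ∀ y ∈ Set.Icc (-4:ℝ) 4, y ≤ z → x ≤ y → g y ≤ g x := by
    intro x hx y hy hyz hxy
    have hanti : AntitoneOn g (Set.Icc (-4) y) := by
      apply antitoneOn_of_deriv_nonpos (convex_Icc _ _) hgc.continuousOn
      · intro s _; exact (hgd s).differentiableAt.differentiableWithinAt
      · intro s hs
        rw [interior_Icc] at hs
        rw [(hgd s).deriv]
        have hsI : s ∈ Set.Icc (-4:ℝ) 4 := ⟨hs.1.le, le_trans hs.2.le hy.2⟩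
        have hzI : z ∈ Set.Icc (-4:ℝ) 4 := ⟨hz.1, hz.2⟩
        have hsz : s ≤ z := le_trans hs.2.le hyz
        have h5 : sigmoid s - dlt * s ≤ sigmoid z - dlt * z := u_mono hsI hzI hsz
        nlinarith [h5]
    exact hanti ⟨hx.1, hxy⟩ ⟨hy.1, le_rfl⟩ hxy
  have hzI : z ∈ Set.Icc (-4:ℝ) 4 := ⟨hz.1, hz.2⟩
  have htI : t ∈ Set.Icc (-4:ℝ) 4 := ⟨ht.1, ht.2⟩
  rcases le_total z t with h | h
  · have := key z hzI t htI le_rfl h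
    simp only [hg] at this
    nlinarith [this]
  · have := key' t htI z hzI le_rfl h
    simp only [hg] at this
    nlinarith [this]

lemma ell_mono (z : ℝ) : MonotoneOn (fun t => ell z t) (Set.Ici z) := by
  apply monotoneOn_of_deriv_nonneg (convex_Ici _) (continuous_ell z).continuousOn
  · intro s _; exact (hasDerivAt_ell z s).differentiableAt.differentiableWithinAt
  · intro s hs
    rw [interior_Ici] at hs
    rw [(hasDerivAt_ell z s).deriv]
    have := sigmoid_mono (le_of_lt hs)
    linarith

lemma ell_anti (z : ℝ) : AntitoneOn (fun t => ell z t) (Set.Iic z) := by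
  apply antitoneOn_of_deriv_nonpos (convex_Iic _) (continuous_ell z).continuousOn
  · intro s _; exact (hasDerivAt_ell z s).differentiableAt.differentiableWithinAt
  · intro s hs
    rw [interior_Iic] at hs
    rw [(hasDerivAt_ell z s).deriv]
    have := sigmoid_mono (le_of_lt hs)
    linarith

lemma ell_self_le (z t : ℝ) : ell z z ≤ ell z t := by
  rcases le_total z t with h | h
  · exact ell_mono z (Set.self_mem_Ici) h h
  · exact ell_anti z h (Set.self_mem_Iic) h

lemma ell_case2_pos {z t : ℝ} (hz : z ∈ Set.Icc (1:ℝ) 2) (ht : z + 1 ≤ t) :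
    ell z z + dlt / 2 ≤ ell z t := by
  have h1 : ell z (z + 1) ≤ ell z t := by
    apply ell_mono z (by simp : z + 1 ∈ Set.Ici z) (le_trans (by simp) ht) ht
  have h2 : ell z z + dlt / 2 * (z + 1 - z) ^ 2 ≤ ell z (z + 1) := by
    apply ell_ge (by rw [abs_le]; constructor <;> linarith [hz.1, hz.2])
      (by rw [abs_le]; constructor <;> linarith [hz.1, hz.2])
  have h3 : (z + 1 - z) ^ 2 = 1 := by ring
  rw [h3, mul_one] at h2
  linarith

lemma ell_case2_neg {z t : ℝ} (hz : z ∈ Set.Icc (1:ℝ) 2) (ht : t ≤ z - 3) :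
    ell z z + dlt / 2 ≤ ell z t := by
  have h1 : ell z (z - 3) ≤ ell z t := by
    apply ell_anti z (le_trans ht (by linarith) : t ∈ Set.Iic z) (by simp : z - 3 ∈ Set.Iic z) ht
  have h2 : ell z z + dlt / 2 * (z - 3 - z) ^ 2 ≤ ell z (z - 3) := by
    apply ell_ge (by rw [abs_le]; constructor <;> linarith [hz.1, hz.2])
      (by rw [abs_le]; constructor <;> linarith [hz.1, hz.2])
  have h3 : (z - 3 - z) ^ 2 = 9 := by ring
  rw [h3] at h2
  have := dlt_pos
  linarith



noncomputable def γ : Measure ℝ := gaussianReal 0 1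

instance : IsProbabilityMeasure γ := by unfold γ; infer_instance

noncomputable def ind1 : ℝ → ℝ := Set.indicator (Set.Icc (-1:ℝ) 1) 1

lemma ind1_meas : Measurable ind1 :=
  measurable_const.indicator measurableSet_Icc

lemma ind1_nonneg (x : ℝ) : 0 ≤ ind1 x := by
  unfold ind1; classical
  rw [Set.indicator_apply]; split <;> norm_num

lemma ind1_le_one (x : ℝ) : ind1 x ≤ 1 := by
  unfold ind1; classical
  rw [Set.indicator_apply]; split <;> norm_num

lemma integrable_of_bounded {Ω : Type*} [MeasurableSpace Ω] (P : Measure Ω)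
    [IsProbabilityMeasure P] {f : Ω → ℝ} (hf : AEStronglyMeasurable f P) (C : ℝ)
    (h : ∀ ω, |f ω| ≤ C) : Integrable f P := by
  apply Integrable.mono' (integrable_const C) hf
  exact ae_of_all _ fun ω => by simpa [Real.norm_eq_abs] using h ω

lemma integrable_id_gauss : Integrable (fun x : ℝ => x) γ := by
  unfold γ
  rw [gaussianReal_of_var_ne_zero 0 one_ne_zero]
  rw [integrable_withDensity_iff (measurable_gaussianPDF 0 1)
    (ae_of_all _ fun x => ENNReal.ofReal_lt_top)]
  have heq : (fun x : ℝ => x * ((gaussianPDF 0 1 x).toReal)) =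
      fun x : ℝ => (Real.sqrt (2 * Real.pi))⁻¹ * (x * Real.exp (-(1/2) * x ^ 2)) := by
    funext x
    rw [gaussianPDF, ENNReal.toReal_ofReal (gaussianPDFReal_nonneg 0 1 x)]
    unfold gaussianPDFReal
    push_cast
    ring_nf
  rw [heq]
  exact (integrable_mul_exp_neg_mul_sq (by norm_num : (0:ℝ) < 1/2)).const_mul _

lemma gauss_map_neg : Measure.map (fun x : ℝ => -x) γ = γ := by
  have h := gaussianReal_map_const_mul (μ := 0) (v := 1) (-1)
  have h2 : (fun x : ℝ => (-1) * x) = fun x : ℝ => -x := by funext x; ring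
  rw [h2] at h
  unfold γ
  rw [h]
  congr 1
  · ring
  · ext
    norm_num

lemma odd_ind_zero : ∫ x, x * ind1 x ∂γ = 0 := by
  have hmeas : AEMeasurable (fun x : ℝ => -x) γ := measurable_neg.aemeasurable
  have hsm : AEStronglyMeasurable (fun x => x * ind1 x) (Measure.map (fun x : ℝ => -x) γ) :=
    (measurable_id.mul ind1_meas).aestronglyMeasurable
  have h1 : ∫ x, x * ind1 x ∂γ = ∫ x, (-x) * ind1 (-x) ∂γ := by
    conv_lhs => rw [← gauss_map_neg]
    rw [integral_map hmeas hsm]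
  have hind : ∀ x : ℝ, ind1 (-x) = ind1 x := by
    intro x
    unfold ind1; classical
    rw [Set.indicator_apply, Set.indicator_apply]
    have : -x ∈ Set.Icc (-1:ℝ) 1 ↔ x ∈ Set.Icc (-1:ℝ) 1 := by
      simp only [Set.mem_Icc]; constructor <;> intro ⟨a, b⟩ <;> constructor <;> linarith
    simp [this]
  have h2 : ∫ x, (-x) * ind1 (-x) ∂γ = -∫ x, x * ind1 x ∂γ := by
    rw [← integral_neg]
    congr 1
    funext x
    rw [hind x]
    ring
  rw [h2] at h1
  linarith

lemma gauss_Icc_pos {c d : ℝ} (h : c < d) : 0 < (γ (Set.Icc c d)).toReal := by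
  have hne : γ (Set.Icc c d) ≠ 0 := by
    intro h0
    have := (gaussianReal_absolutelyContinuous' 0 (one_ne_zero)) h0
    rw [Real.volume_Icc] at this
    rw [ENNReal.ofReal_eq_zero] at this
    linarith
  have hlt : γ (Set.Icc c d) < ⊤ := lt_of_le_of_lt (measure_mono (Set.subset_univ _))
    (by rw [measure_univ]; exact ENNReal.one_lt_top)
  exact ENNReal.toReal_pos hne hlt.ne


noncomputable def mI : ℝ := (γ (Set.Icc (-1:ℝ) 1)).toReal
noncomputable def aI : ℝ := ∫ x, x ^ 2 * ind1 x ∂γ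
noncomputable def m2 : ℝ := (γ (Set.Icc (1:ℝ) 2)).toReal
noncomputable def m3 : ℝ := (γ (Set.Icc (0:ℝ) 1)).toReal

lemma mI_pos : 0 < mI := gauss_Icc_pos (by norm_num)
lemma m2_pos : 0 < m2 := gauss_Icc_pos (by norm_num)
lemma m3_pos : 0 < m3 := gauss_Icc_pos (by norm_num)

lemma phi2_bound (x : ℝ) : |x ^ 2 * ind1 x| ≤ 1 := by
  unfold ind1; classical
  rw [Set.indicator_apply]
  split
  · rename_i h
    rw [Set.mem_Icc] at h
    rw [Pi.one_apply, mul_one, abs_of_nonneg (sq_nonneg x)]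
    nlinarith [h.1, h.2]
  · simp

lemma phi1_bound (x : ℝ) : |x * ind1 x| ≤ 1 := by
  unfold ind1; classical
  rw [Set.indicator_apply]
  split
  · rename_i h
    rw [Set.mem_Icc] at h
    rw [Pi.one_apply, mul_one, abs_le]
    exact ⟨h.1, h.2⟩
  · simp

lemma phi0_bound (x : ℝ) : |ind1 x| ≤ 1 := by
  rw [abs_of_nonneg (ind1_nonneg x)]; exact ind1_le_one x

lemma aI_pos : 0 < aI := by
  have hlow : (1/4 : ℝ) * (γ (Set.Icc (1/2:ℝ) 1)).toReal ≤ aI := by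
    unfold aI
    have : (1/4 : ℝ) * (γ (Set.Icc (1/2:ℝ) 1)).toReal
        = ∫ x, (1/4 : ℝ) * Set.indicator (Set.Icc (1/2:ℝ) 1) 1 x ∂γ := by
      rw [integral_const_mul, integral_indicator_one measurableSet_Icc, measureReal_def]
    rw [this]
    apply integral_mono
    · apply (integrable_of_bounded γ _ 1 _).const_mul
      · exact (measurable_const.indicator measurableSet_Icc).aestronglyMeasurable
      · intro x; classical
        rw [Set.indicator_apply]; split <;> simp
    · apply integrable_of_bounded γ _ 1 phi2_bound
      exact ((measurable_id.pow_const 2).mul ind1_meas).aestronglyMeasurable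
    · intro x
      classical
      show (1/4 : ℝ) * Set.indicator (Set.Icc (1/2:ℝ) 1) 1 x ≤ x ^ 2 * ind1 x
      by_cases hx : x ∈ Set.Icc (1/2:ℝ) 1
      · rw [Set.indicator_of_mem hx]
        rw [Set.mem_Icc] at hx
        have hx1 : x ∈ Set.Icc (-1:ℝ) 1 := by
          rw [Set.mem_Icc]; constructor <;> linarith [hx.1, hx.2]
        unfold ind1
        rw [Set.indicator_of_mem hx1]
        simp only [Pi.one_apply, mul_one]
        nlinarith [hx.1]
      · rw [Set.indicator_of_notMem hx]
        simp only [mul_zero]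
        exact mul_nonneg (sq_nonneg x) (ind1_nonneg x)
  have := gauss_Icc_pos (show (1/2:ℝ) < 1 by norm_num)
  linarith

noncomputable def Cmain : ℝ := dlt / 2 * min (aI * mI) (m2 * m3)

lemma Cmain_pos : 0 < Cmain := by
  unfold Cmain
  have := dlt_pos
  have := aI_pos; have := mI_pos; have := m2_pos; have := m3_pos
  have h1 : 0 < aI * mI := by positivity
  have h2 : 0 < m2 * m3 := by positivity
  have := lt_min h1 h2
  positivity

lemma logexp_bound (t : ℝ) : |Real.log (1 + Real.exp t)| ≤ Real.log 2 + |t| := by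
  have h1 : (0:ℝ) ≤ Real.log (1 + Real.exp t) := by
    apply Real.log_nonneg
    linarith [Real.exp_pos t]
  rw [abs_of_nonneg h1]
  have h2 : 1 + Real.exp t ≤ 2 * Real.exp |t| := by
    have := Real.exp_le_exp.2 (le_abs_self t)
    have h3 : (1:ℝ) ≤ Real.exp |t| := Real.one_le_exp (abs_nonneg t)
    linarith
  calc Real.log (1 + Real.exp t) ≤ Real.log (2 * Real.exp |t|) := by
        apply Real.log_le_log (by positivity) h2
    _ = Real.log 2 + |t| := by rw [Real.log_mul (by norm_num) (Real.exp_pos _).ne', Real.log_exp]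

lemma integrable_loss {Ω : Type*} [MeasurableSpace Ω] (P : Measure Ω)
    [IsProbabilityMeasure P] {Z f : Ω → ℝ} (hZ : AEMeasurable Z P) (hf : AEMeasurable f P)
    (hfi : Integrable f P) :
    Integrable (fun ω => -(sigmoid (Z ω)) * f ω + Real.log (1 + Real.exp (f ω))) P := by
  have hsm : AEStronglyMeasurable (fun ω => -(sigmoid (Z ω)) * f ω
      + Real.log (1 + Real.exp (f ω))) P := by
    apply AEMeasurable.aestronglyMeasurable
    apply AEMeasurable.add
    · exact ((continuous_sigmoid.aemeasurable.comp_aemeasurable hZ).neg).mul hf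
    · exact Real.measurable_log.comp_aemeasurable
        (aemeasurable_const.add (Real.measurable_exp.comp_aemeasurable hf))
  apply Integrable.mono' ((hfi.abs.const_mul 2).add (integrable_const (Real.log 2))) hsm
  apply ae_of_all
  intro ω
  rw [Real.norm_eq_abs]
  have h1 : |(-(sigmoid (Z ω))) * f ω| ≤ |f ω| := by
    rw [abs_mul, abs_neg, abs_of_pos (sigmoid_pos _)]
    nlinarith [sigmoid_pos (Z ω), sigmoid_lt_one (Z ω), abs_nonneg (f ω)]
  calc |(-(sigmoid (Z ω))) * f ω + Real.log (1 + Real.exp (f ω))|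
      ≤ |(-(sigmoid (Z ω))) * f ω| + |Real.log (1 + Real.exp (f ω))| := abs_add_le _ _
    _ ≤ |f ω| + (Real.log 2 + |f ω|) := add_le_add h1 (logexp_bound _)
    _ = 2 * |f ω| + Real.log 2 := by ring


noncomputable def φ1 (x : ℝ) : ℝ := x * ind1 x
noncomputable def φ2 (x : ℝ) : ℝ := x ^ 2 * ind1 x

lemma φ1_meas : Measurable φ1 := measurable_id.mul ind1_meas
lemma φ2_meas : Measurable φ2 := (measurable_id.pow_const 2).mul ind1_meas
lemma φ1_bound (x : ℝ) : |φ1 x| ≤ 1 := phi1_bound x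
lemma φ2_bound (x : ℝ) : |φ2 x| ≤ 1 := phi2_bound x

lemma aI_eq : aI = ∫ x, φ2 x ∂γ := rfl
lemma g1_eq : ∫ x, φ1 x ∂γ = 0 := odd_ind_zero
lemma g0_eq : ∫ x, ind1 x ∂γ = mI := by
  unfold mI; rw [← measureReal_def, ← integral_indicator_one measurableSet_Icc]; rfl

noncomputable def ind2 : ℝ → ℝ := Set.indicator (Set.Icc (1:ℝ) 2) 1
noncomputable def ind3 : ℝ → ℝ := Set.indicator (Set.Icc (0:ℝ) 1) 1

lemma ind2_meas : Measurable ind2 := measurable_const.indicator measurableSet_Icc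
lemma ind3_meas : Measurable ind3 := measurable_const.indicator measurableSet_Icc

lemma ind2_bound (x : ℝ) : |ind2 x| ≤ 1 := by
  unfold ind2; classical
  rw [Set.indicator_apply]; split <;> simp

lemma ind3_bound (x : ℝ) : |ind3 x| ≤ 1 := by
  unfold ind3; classical
  rw [Set.indicator_apply]; split <;> simp

lemma ind2_eq : ∫ x, ind2 x ∂γ = m2 := by
  unfold m2; rw [← measureReal_def, ← integral_indicator_one measurableSet_Icc]; rfl

lemma ind3_eq : ∫ x, ind3 x ∂γ = m3 := by
  unfold m3; rw [← measureReal_def, ← integral_indicator_one measurableSet_Icc]; rfl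

end LBC

/-- Lower bound on convergence: there is a universal constant `C > 0` such that for
independent standard Gaussians `Z, ξ` with label `y | Z ~ Bernoulli(σ(Z))` (Bayes-optimal
logit `Z`), and any `p ≥ 1`, the minimizer `ẑ = ĉ(Z + ξ/√p)` of the expected BCE loss over
logits of the form `c(Z + ξ/√p)` has excess loss `L(ẑ) − L(Z) ≥ C/(p+1)`. -/
theorem lower_bound_on_convergence :
    ∃ C : ℝ, 0 < C ∧
      ∀ (Ω : Type) [MeasurableSpace Ω] (P : Measure Ω) [IsProbabilityMeasure P]
        (Z ξ : Ω → ℝ),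
        Measure.map Z P = gaussianReal 0 1 →
        Measure.map ξ P = gaussianReal 0 1 →
        IndepFun Z ξ P →
        ∀ p : ℕ, 1 ≤ p →
        ∀ chat : ℝ,
          (∀ c : ℝ,
            softLoss P Z (fun ω => chat * (Z ω + ξ ω / Real.sqrt p))
              ≤ softLoss P Z (fun ω => c * (Z ω + ξ ω / Real.sqrt p))) →
          C / (p + 1)
            ≤ softLoss P Z (fun ω => chat * (Z ω + ξ ω / Real.sqrt p)) - softLoss P Z Z := by
  classical
  refine ⟨LBC.Cmain, LBC.Cmain_pos, ?_⟩
  intro Ω mΩ P iP Z ξ hZ hξ hind p hp chat _hmin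
  set s : ℝ := Real.sqrt p with hs_def
  have hp1 : (1:ℝ) ≤ (p:ℝ) := by exact_mod_cast hp
  have hp0 : (0:ℝ) < (p:ℝ) := by linarith
  have hs1 : 1 ≤ s := Real.one_le_sqrt.2 hp1
  have hs0 : 0 < s := by linarith
  have hsq : s ^ 2 = (p:ℝ) := Real.sq_sqrt (by positivity)
  -- a.e.-measurability of Z, ξ
  have hZm : AEMeasurable Z P := by
    by_contra h
    rw [Measure.map_of_not_aemeasurable h] at hZ
    have h1 : (gaussianReal 0 1) Set.univ = 1 := measure_univ
    rw [← hZ] at h1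
    simp at h1
  have hξm : AEMeasurable ξ P := by
    by_contra h
    rw [Measure.map_of_not_aemeasurable h] at hξ
    have h1 : (gaussianReal 0 1) Set.univ = 1 := measure_univ
    rw [← hξ] at h1
    simp at h1
  -- integrability of Z, ξ
  have hZi : Integrable Z P := by
    have h1 : Integrable (id : ℝ → ℝ) (Measure.map Z P) := by
      rw [hZ]; exact LBC.integrable_id_gauss
    rw [integrable_map_measure aestronglyMeasurable_id hZm] at h1
    exact h1
  have hξi : Integrable ξ P := by
    have h1 : Integrable (id : ℝ → ℝ) (Measure.map ξ P) := by
      rw [hξ]; exact LBC.integrable_id_gauss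
    rw [integrable_map_measure aestronglyMeasurable_id hξm] at h1
    exact h1
  have hfi : Integrable (fun ω => chat * (Z ω + ξ ω / s)) P :=
    (hZi.add (hξi.div_const s)).const_mul chat
  have hfm : AEMeasurable (fun ω => chat * (Z ω + ξ ω / s)) P :=
    (hZm.add (hξm.div_const s)).const_mul chat
  -- integrability of the two loss integrands
  have hI1 : Integrable (fun ω => -(sigmoid (Z ω)) * (chat * (Z ω + ξ ω / s))
      + Real.log (1 + Real.exp (chat * (Z ω + ξ ω / s)))) P :=
    LBC.integrable_loss P hZm hfm hfi
  have hI0 : Integrable (fun ω => -(sigmoid (Z ω)) * (Z ω)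
      + Real.log (1 + Real.exp (Z ω))) P :=
    LBC.integrable_loss P hZm hZm hZi
  have hDi : Integrable
      (fun ω => LBC.ell (Z ω) (chat * (Z ω + ξ ω / s)) - LBC.ell (Z ω) (Z ω)) P := hI1.sub hI0
  have hEeq : softLoss P Z (fun ω => chat * (Z ω + ξ ω / s)) - softLoss P Z Z
      = ∫ ω, (LBC.ell (Z ω) (chat * (Z ω + ξ ω / s)) - LBC.ell (Z ω) (Z ω)) ∂P := by
    unfold softLoss
    rw [← integral_sub hI1 hI0]
    rfl
  rw [hEeq]
  have hD0 : ∀ ω, 0 ≤ LBC.ell (Z ω) (chat * (Z ω + ξ ω / s)) - LBC.ell (Z ω) (Z ω) :=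
    fun ω => sub_nonneg.2 (LBC.ell_self_le _ _)
  -- integral computation toolbox
  have hint : ∀ (g : ℝ → ℝ), Measurable g → (∀ x, |g x| ≤ 1) →
      ∀ (X : Ω → ℝ), AEMeasurable X P → Measure.map X P = gaussianReal 0 1 →
      (∫ ω, g (X ω) ∂P = ∫ x, g x ∂LBC.γ ∧ Integrable (fun ω => g (X ω)) P) := by
    intro g hg hb X hXm hX
    constructor
    · rw [show LBC.γ = gaussianReal 0 1 from rfl, ← hX,
        integral_map hXm hg.aestronglyMeasurable]
    · exact LBC.integrable_of_bounded P
        ((hg.comp_aemeasurable hXm).aestronglyMeasurable) 1 (fun ω => hb _)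
  have hprod : ∀ (g h : ℝ → ℝ), Measurable g → Measurable h →
      (∀ x, |g x| ≤ 1) → (∀ x, |h x| ≤ 1) →
      (∫ ω, g (Z ω) * h (ξ ω) ∂P = (∫ x, g x ∂LBC.γ) * (∫ x, h x ∂LBC.γ)
        ∧ Integrable (fun ω => g (Z ω) * h (ξ ω)) P) := by
    intro g h hg hh hgb hhb
    have e1 := (hind.comp hg hh).integral_mul_eq_mul_integral
      ((hg.comp_aemeasurable hZm).aestronglyMeasurable)
      ((hh.comp_aemeasurable hξm).aestronglyMeasurable)
    constructor
    · calc ∫ ω, g (Z ω) * h (ξ ω) ∂P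
          = integral P ((g ∘ Z) * (h ∘ ξ)) := rfl
        _ = (∫ ω, g (Z ω) ∂P) * (∫ ω, h (ξ ω) ∂P) := e1
        _ = (∫ x, g x ∂LBC.γ) * (∫ x, h x ∂LBC.γ) := by
            rw [(hint g hg hgb Z hZm hZ).1, (hint h hh hhb ξ hξm hξ).1]
    · apply LBC.integrable_of_bounded P
        (((hg.comp_aemeasurable hZm).mul (hh.comp_aemeasurable hξm)).aestronglyMeasurable) 1
      intro ω
      show |g (Z ω) * h (ξ ω)| ≤ 1
      rw [abs_mul]
      calc |g (Z ω)| * |h (ξ ω)| ≤ 1 * 1 :=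
            mul_le_mul (hgb _) (hhb _) (abs_nonneg _) zero_le_one
        _ = 1 := by norm_num
  rcases le_or_gt |chat| 2 with hc | hc
  · -- |chat| ≤ 2 : quadratic regime
    have hpt : ∀ ω, LBC.dlt / 2 * (((chat - 1) * Z ω + (chat / s) * ξ ω) ^ 2
          * (LBC.ind1 (Z ω) * LBC.ind1 (ξ ω)))
        ≤ LBC.ell (Z ω) (chat * (Z ω + ξ ω / s)) - LBC.ell (Z ω) (Z ω) := by
      intro ω
      by_cases hZω : Z ω ∈ Set.Icc (-1:ℝ) 1
      · by_cases hξω : ξ ω ∈ Set.Icc (-1:ℝ) 1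
        · have e1 : LBC.ind1 (Z ω) = 1 := by
            unfold LBC.ind1; rw [Set.indicator_of_mem hZω]; rfl
          have e2 : LBC.ind1 (ξ ω) = 1 := by
            unfold LBC.ind1; rw [Set.indicator_of_mem hξω]; rfl
          rw [e1, e2, mul_one, mul_one]
          rw [Set.mem_Icc] at hZω hξω
          have hzabs : |Z ω| ≤ 1 := abs_le.2 ⟨hZω.1, hZω.2⟩
          have hz4 : |Z ω| ≤ 4 := by linarith
          have hxabs : |ξ ω| ≤ 1 := abs_le.2 ⟨hξω.1, hξω.2⟩
          have hxs : |ξ ω / s| ≤ 1 := by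
            rw [abs_div, abs_of_pos hs0, div_le_one hs0]
            linarith
          have ht4 : |chat * (Z ω + ξ ω / s)| ≤ 4 := by
            rw [abs_mul]
            have h1 : |Z ω + ξ ω / s| ≤ 2 :=
              le_trans (abs_add_le _ _) (by linarith)
            nlinarith [abs_nonneg chat, abs_nonneg (Z ω + ξ ω / s)]
          have hkey := LBC.ell_ge hz4 ht4
          have harr : chat * (Z ω + ξ ω / s) - Z ω
              = (chat - 1) * Z ω + (chat / s) * ξ ω := by
            field_simp
            ring
          rw [← harr]
          linarith [hkey]
        · have e2 : LBC.ind1 (ξ ω) = 0 := by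
            unfold LBC.ind1; rw [Set.indicator_of_notMem hξω]
          rw [e2, mul_zero, mul_zero, mul_zero]
          exact hD0 ω
      · have e1 : LBC.ind1 (Z ω) = 0 := by
          unfold LBC.ind1; rw [Set.indicator_of_notMem hZω]
        rw [e1, zero_mul, mul_zero, mul_zero]
        exact hD0 ω
    have hexp : (fun ω => LBC.dlt / 2 * (((chat - 1) * Z ω + (chat / s) * ξ ω) ^ 2
          * (LBC.ind1 (Z ω) * LBC.ind1 (ξ ω))))
        = fun ω => LBC.dlt / 2 * ((chat - 1) ^ 2 * (LBC.φ2 (Z ω) * LBC.ind1 (ξ ω))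
          + (2 * (chat - 1) * (chat / s)) * (LBC.φ1 (Z ω) * LBC.φ1 (ξ ω))
          + (chat / s) ^ 2 * (LBC.ind1 (Z ω) * LBC.φ2 (ξ ω))) := by
      funext ω
      unfold LBC.φ1 LBC.φ2
      ring
    have h20 := hprod LBC.φ2 LBC.ind1 LBC.φ2_meas LBC.ind1_meas LBC.φ2_bound LBC.phi0_bound
    have h11 := hprod LBC.φ1 LBC.φ1 LBC.φ1_meas LBC.φ1_meas LBC.φ1_bound LBC.φ1_bound
    have h02 := hprod LBC.ind1 LBC.φ2 LBC.ind1_meas LBC.φ2_meas LBC.phi0_bound LBC.φ2_bound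
    have hGi : Integrable (fun ω => LBC.dlt / 2 * (((chat - 1) * Z ω + (chat / s) * ξ ω) ^ 2
        * (LBC.ind1 (Z ω) * LBC.ind1 (ξ ω)))) P := by
      rw [hexp]
      exact (((h20.2.const_mul _).add (h11.2.const_mul _)).add (h02.2.const_mul _)).const_mul _
    have hGval : ∫ ω, LBC.dlt / 2 * (((chat - 1) * Z ω + (chat / s) * ξ ω) ^ 2
          * (LBC.ind1 (Z ω) * LBC.ind1 (ξ ω))) ∂P
        = LBC.dlt / 2 * ((chat - 1) ^ 2 * (LBC.aI * LBC.mI)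
          + (chat / s) ^ 2 * (LBC.mI * LBC.aI)) := by
      have hA : Integrable (fun ω => (chat - 1) ^ 2 * (LBC.φ2 (Z ω) * LBC.ind1 (ξ ω))) P :=
        h20.2.const_mul _
      have hB : Integrable (fun ω => (2 * (chat - 1) * (chat / s))
          * (LBC.φ1 (Z ω) * LBC.φ1 (ξ ω))) P := h11.2.const_mul _
      have hC : Integrable (fun ω => (chat / s) ^ 2 * (LBC.ind1 (Z ω) * LBC.φ2 (ξ ω))) P :=
        h02.2.const_mul _
      have hAB : Integrable (fun ω => (chat - 1) ^ 2 * (LBC.φ2 (Z ω) * LBC.ind1 (ξ ω))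
          + (2 * (chat - 1) * (chat / s)) * (LBC.φ1 (Z ω) * LBC.φ1 (ξ ω))) P := hA.add hB
      rw [hexp, integral_const_mul]
      rw [show (fun ω => (chat - 1) ^ 2 * (LBC.φ2 (Z ω) * LBC.ind1 (ξ ω))
          + (2 * (chat - 1) * (chat / s)) * (LBC.φ1 (Z ω) * LBC.φ1 (ξ ω))
          + (chat / s) ^ 2 * (LBC.ind1 (Z ω) * LBC.φ2 (ξ ω)))
        = fun ω => ((chat - 1) ^ 2 * (LBC.φ2 (Z ω) * LBC.ind1 (ξ ω))
          + (2 * (chat - 1) * (chat / s)) * (LBC.φ1 (Z ω) * LBC.φ1 (ξ ω)))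
          + (chat / s) ^ 2 * (LBC.ind1 (Z ω) * LBC.φ2 (ξ ω)) from rfl]
      rw [integral_add hAB hC, integral_add hA hB]
      rw [integral_const_mul, integral_const_mul, integral_const_mul]
      rw [h20.1, h11.1, h02.1, LBC.g0_eq, LBC.g1_eq, ← LBC.aI_eq]
      ring
    have hdiv : (chat / s) ^ 2 = chat ^ 2 / (p:ℝ) := by
      rw [div_pow, hsq]
    have halg : 1 / ((p:ℝ) + 1) ≤ (chat - 1) ^ 2 + chat ^ 2 / (p:ℝ) := by
      rw [div_le_iff₀ (by linarith : (0:ℝ) < (p:ℝ) + 1)]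
      have hid : (p:ℝ) * (((chat - 1) ^ 2 + chat ^ 2 / (p:ℝ)) * ((p:ℝ) + 1) - 1)
          = (((p:ℝ) + 1) * chat - (p:ℝ)) ^ 2 := by
        field_simp
        ring
      nlinarith [sq_nonneg (((p:ℝ) + 1) * chat - (p:ℝ)), hp0, hid]
    have hpos : (0:ℝ) < LBC.dlt / 2 * (LBC.aI * LBC.mI) := by
      have := LBC.dlt_pos; have := LBC.aI_pos; have := LBC.mI_pos
      positivity
    calc LBC.Cmain / ((p:ℝ) + 1)
        ≤ LBC.dlt / 2 * (LBC.aI * LBC.mI) / ((p:ℝ) + 1) := by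
          have h1 : LBC.Cmain ≤ LBC.dlt / 2 * (LBC.aI * LBC.mI) := by
            have hd2 : 0 ≤ LBC.dlt / 2 := by
              have := LBC.dlt_pos; linarith
            rw [show LBC.Cmain = LBC.dlt / 2 * min (LBC.aI * LBC.mI) (LBC.m2 * LBC.m3) from rfl]
            exact mul_le_mul_of_nonneg_left (min_le_left _ _) hd2
          exact (div_le_div_iff_of_pos_right (show (0:ℝ) < (p:ℝ) + 1 by linarith)).2 h1
      _ = LBC.dlt / 2 * (LBC.aI * LBC.mI) * (1 / ((p:ℝ) + 1)) := by ring
      _ ≤ LBC.dlt / 2 * (LBC.aI * LBC.mI) * ((chat - 1) ^ 2 + chat ^ 2 / (p:ℝ)) :=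
          mul_le_mul_of_nonneg_left halg hpos.le
      _ = LBC.dlt / 2 * ((chat - 1) ^ 2 * (LBC.aI * LBC.mI)
          + (chat / s) ^ 2 * (LBC.mI * LBC.aI)) := by rw [hdiv]; ring
      _ = ∫ ω, LBC.dlt / 2 * (((chat - 1) * Z ω + (chat / s) * ξ ω) ^ 2
          * (LBC.ind1 (Z ω) * LBC.ind1 (ξ ω))) ∂P := hGval.symm
      _ ≤ ∫ ω, (LBC.ell (Z ω) (chat * (Z ω + ξ ω / s)) - LBC.ell (Z ω) (Z ω)) ∂P :=
          integral_mono hGi hDi hpt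
  · -- |chat| > 2 : constant regime
    have hpt : ∀ ω, LBC.dlt / 2 * (LBC.ind2 (Z ω) * LBC.ind3 (ξ ω))
        ≤ LBC.ell (Z ω) (chat * (Z ω + ξ ω / s)) - LBC.ell (Z ω) (Z ω) := by
      intro ω
      by_cases hZω : Z ω ∈ Set.Icc (1:ℝ) 2
      · by_cases hξω : ξ ω ∈ Set.Icc (0:ℝ) 1
        · have e1 : LBC.ind2 (Z ω) = 1 := by
            unfold LBC.ind2; rw [Set.indicator_of_mem hZω]; rfl
          have e2 : LBC.ind3 (ξ ω) = 1 := by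
            unfold LBC.ind3; rw [Set.indicator_of_mem hξω]; rfl
          rw [e1, e2, mul_one, mul_one]
          have hzI := hZω
          rw [Set.mem_Icc] at hZω hξω
          have hxs0 : 0 ≤ ξ ω / s := div_nonneg hξω.1 hs0.le
          have hW1 : 1 ≤ Z ω + ξ ω / s := by linarith [hZω.1]
          have hWz : Z ω ≤ Z ω + ξ ω / s := by linarith
          rcases lt_or_ge 2 chat with hcp | hcn
          · have ht : Z ω + 1 ≤ chat * (Z ω + ξ ω / s) := by
              have h2W : 2 * (Z ω + ξ ω / s) ≤ chat * (Z ω + ξ ω / s) :=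
                mul_le_mul_of_nonneg_right hcp.le (by linarith)
              linarith
            have := LBC.ell_case2_pos hzI ht
            linarith
          · have hcneg : chat < -2 := by
              rcases abs_cases chat with ⟨h1, _⟩ | ⟨h1, _⟩
              · linarith
              · linarith
            have ht : chat * (Z ω + ξ ω / s) ≤ Z ω - 3 := by
              have h2W : chat * (Z ω + ξ ω / s) ≤ -2 * (Z ω + ξ ω / s) :=
                mul_le_mul_of_nonneg_right hcneg.le (by linarith)
              linarith
            have := LBC.ell_case2_neg hzI ht
            linarith
        · have e2 : LBC.ind3 (ξ ω) = 0 := by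
            unfold LBC.ind3; rw [Set.indicator_of_notMem hξω]
          rw [e2, mul_zero, mul_zero]
          exact hD0 ω
      · have e1 : LBC.ind2 (Z ω) = 0 := by
          unfold LBC.ind2; rw [Set.indicator_of_notMem hZω]
        rw [e1, zero_mul, mul_zero]
        exact hD0 ω
    have h23 := hprod LBC.ind2 LBC.ind3 LBC.ind2_meas LBC.ind3_meas LBC.ind2_bound LBC.ind3_bound
    have hGi : Integrable (fun ω => LBC.dlt / 2 * (LBC.ind2 (Z ω) * LBC.ind3 (ξ ω))) P :=
      h23.2.const_mul _
    have hGval : ∫ ω, LBC.dlt / 2 * (LBC.ind2 (Z ω) * LBC.ind3 (ξ ω)) ∂P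
        = LBC.dlt / 2 * (LBC.m2 * LBC.m3) := by
      rw [integral_const_mul, h23.1, LBC.ind2_eq, LBC.ind3_eq]
    have hple : (1:ℝ) ≤ (p:ℝ) + 1 := by linarith
    have hstep1 : LBC.Cmain / ((p:ℝ) + 1) ≤ LBC.Cmain :=
      div_le_self LBC.Cmain_pos.le hple
    calc LBC.Cmain / ((p:ℝ) + 1)
        ≤ LBC.Cmain := hstep1
      _ ≤ LBC.dlt / 2 * (LBC.m2 * LBC.m3) := by
          have hd2 : 0 ≤ LBC.dlt / 2 := by
            have := LBC.dlt_pos; linarith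
          rw [show LBC.Cmain = LBC.dlt / 2 * min (LBC.aI * LBC.mI) (LBC.m2 * LBC.m3) from rfl]
          exact mul_le_mul_of_nonneg_left (min_le_right _ _) hd2
      _ = ∫ ω, LBC.dlt / 2 * (LBC.ind2 (Z ω) * LBC.ind3 (ξ ω)) ∂P := hGval.symm
      _ ≤ ∫ ω, (LBC.ell (Z ω) (chat * (Z ω + ξ ω / s)) - LBC.ell (Z ω) (Z ω)) ∂P :=
          integral_mono hGi hDi hpt
end
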